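/- Let f : D → ℂ be polar-analytic on an open set D ⊆ H, let c ∈ ℝ, let (r₀,θ₀) ∈ D, and let ρ > 0 be such that the polar disk E((r₀,θ₀),ρ) is contained in D. Then for every (r,θ) ∈ E((r₀,θ₀),ρ) the series Σ_{k=0}^∞ (Θ_c^k f)(r₀,θ₀)/k! · (log(r/r₀) + i(θ−θ₀))^k converges absolutely and r^c e^{icθ} f(r,θ) = r₀^c e^{icθ₀} Σ_{k=0}^∞ (Θ_c^k f)(r₀,θ₀)/k! · (log(r/r₀) + i(θ−θ₀))^k; moreover the convergence is uniform on E((r₀,θ₀),ρ') for every 0 < ρ' < ρ. -/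

import Mathlib

open MeasureTheory Filter Complex ENNReal

noncomputable section

/-- The right half-plane `H = {(r,θ) : r > 0}`. -/
def polarHalfPlane : Set (ℝ × ℝ) := {p : ℝ × ℝ | 0 < p.1}

/-- `f` has polar derivative `L` at `p`, the limit being taken within `D`. -/
def HasPolarDerivAt (f : ℝ × ℝ → ℂ) (D : Set (ℝ × ℝ)) (p : ℝ × ℝ) (L : ℂ) : Prop :=
  Tendsto (fun q : ℝ × ℝ =>
      (f q - f p) /
        ((q.1 : ℂ) * Complex.exp (Complex.I * (q.2 : ℂ)) -
         (p.1 : ℂ) * Complex.exp (Complex.I * (p.2 : ℂ))))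
    (nhdsWithin p (D \ {p})) (nhds L)

/-- `f` is polar-analytic on `D`. -/
def PolarAnalyticOn (f : ℝ × ℝ → ℂ) (D : Set (ℝ × ℝ)) : Prop :=
  ∀ p ∈ D, ∃ L : ℂ, HasPolarDerivAt f D p L

/-- The polar Mellin derivative `Θ_c f = r ∂f/∂r + c f`. -/
def mellinPolarDeriv (c : ℝ) (f : ℝ × ℝ → ℂ) : ℝ × ℝ → ℂ :=
  fun p => (p.1 : ℂ) * deriv (fun r : ℝ => f (r, p.2)) p.1 + (c : ℂ) * f p

/-- The `X_c^p` norm. -/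
def XNorm (c : ℝ) (p : ℝ≥0∞) (φ : ℝ → ℂ) : ℝ≥0∞ :=
  if p = ⊤ then ⨆ r : {r : ℝ // 0 < r}, ENNReal.ofReal ((r : ℝ) ^ c * ‖φ r‖)
  else (∫⁻ r in Set.Ioi (0 : ℝ),
          ENNReal.ofReal ((r ^ c * ‖φ r‖) ^ p.toReal / r)) ^ (1 / p.toReal)

/-- Membership in the Mellin–Bernstein space `B^p_{c,T}`. -/
def MemMellinBernstein (p : ℝ≥0∞) (c T : ℝ) (f : ℝ × ℝ → ℂ) : Prop :=
  PolarAnalyticOn f polarHalfPlane ∧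
  XNorm c p (fun r => f (r, 0)) < ⊤ ∧
  ∃ C : ℝ, 0 < C ∧ ∀ r θ : ℝ, 0 < r → r ^ c * ‖f (r, θ)‖ ≤ C * Real.exp (T * |θ|)

/-- The polar disk `E((r₀,θ₀),ρ)`. -/
def polarDisk (p : ℝ × ℝ) (ρ : ℝ) : Set (ℝ × ℝ) :=
  {q : ℝ × ℝ | 0 < q.1 ∧
    ‖((Real.log (q.1 / p.1) : ℂ) + Complex.I * ((q.2 - p.2 : ℝ) : ℂ))‖ < ρ}

/-- The polar contour integral along the positively oriented boundary of
`[a,b] × [α,β]`:  `∮ g(r,θ) e^{iθ} (dr + i r dθ)`. -/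
def rectPolarIntegral (a b α β : ℝ) (g : ℝ × ℝ → ℂ) : ℂ :=
  (∫ r in a..b, g (r, α) * Complex.exp (Complex.I * (α : ℂ))) +
  (∫ θ in α..β, g (b, θ) * Complex.I * (b : ℂ) * Complex.exp (Complex.I * (θ : ℂ))) -
  (∫ r in a..b, g (r, β) * Complex.exp (Complex.I * (β : ℂ))) -
  (∫ θ in α..β, g (a, θ) * Complex.I * (a : ℂ) * Complex.exp (Complex.I * (θ : ℂ)))

/-- `(r₀,θ₀)` is a logarithmic pole of order `k` of `f`, witnessed by the
neighborhood `U₀` and the polar-analytic function `g`. -/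
def IsLogPole (f : ℝ × ℝ → ℂ) (p : ℝ × ℝ) (k : ℕ) (U₀ : Set (ℝ × ℝ))
    (g : ℝ × ℝ → ℂ) : Prop :=
  IsOpen U₀ ∧ p ∈ U₀ ∧ U₀ ⊆ polarHalfPlane ∧ 1 ≤ k ∧
  PolarAnalyticOn f (U₀ \ {p}) ∧ PolarAnalyticOn g U₀ ∧ g p ≠ 0 ∧
  ∀ q ∈ U₀ \ {p},
    f q = g q / ((Real.log (q.1 / p.1) : ℂ) + Complex.I * ((q.2 - p.2 : ℝ) : ℂ)) ^ k

/-- The `c`-residue of a logarithmic pole of order `k` with witness `g`. -/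
def cResidue (c : ℝ) (p : ℝ × ℝ) (k : ℕ) (g : ℝ × ℝ → ℂ) : ℂ :=
  ((p.1 ^ c : ℝ) : ℂ) * Complex.exp (Complex.I * (c : ℂ) * (p.2 : ℂ)) *
    ((mellinPolarDeriv c)^[k - 1] g p) / ((k - 1).factorial : ℂ)

/-- The central Mellin difference `δ_{c,t} f`. -/
def centralMellinDiff (c t : ℝ) (f : ℝ × ℝ → ℂ) : ℝ × ℝ → ℂ :=
  fun q => ((t ^ c : ℝ) : ℂ) * f (t * q.1, q.2) - ((t ^ (-c) : ℝ) : ℂ) * f (t⁻¹ * q.1, q.2)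


section Aux

open Complex Filter Topology

/-- Pullback of a polar-analytic function under the log chart is ℂ-differentiable. -/
private lemma polar_diffAt {D : Set (ℝ × ℝ)} (hD : IsOpen D) {f : ℝ × ℝ → ℂ}
    (hf : PolarAnalyticOn f D) {z : ℂ} (hz : (Real.exp z.re, z.im) ∈ D) :
    DifferentiableAt ℂ (fun w : ℂ => f (Real.exp w.re, w.im)) z := by
  obtain ⟨L, hL⟩ := hf _ hz
  have hcont : Continuous (fun w : ℂ => ((Real.exp w.re, w.im) : ℝ × ℝ)) :=
    (Real.continuous_exp.comp Complex.continuous_re).prodMk Complex.continuous_im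
  have hinj : ∀ w : ℂ, ((Real.exp w.re, w.im) : ℝ × ℝ) = (Real.exp z.re, z.im) → w = z := by
    intro w h
    have h1 : Real.exp w.re = Real.exp z.re := congrArg Prod.fst h
    have h2 : w.im = z.im := congrArg Prod.snd h
    exact Complex.ext (Real.exp_injective h1) h2
  have hexp : ∀ w : ℂ,
      ((Real.exp w.re : ℝ) : ℂ) * Complex.exp (Complex.I * (w.im : ℂ)) = Complex.exp w := by
    intro w
    rw [Complex.ofReal_exp, ← Complex.exp_add]
    congr 1
    rw [mul_comm Complex.I]
    exact_mod_cast Complex.re_add_im w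
  have h1 : Tendsto (fun w : ℂ => ((Real.exp w.re, w.im) : ℝ × ℝ)) (𝓝[≠] z)
      (nhdsWithin ((Real.exp z.re, z.im) : ℝ × ℝ) (D \ {((Real.exp z.re, z.im) : ℝ × ℝ)})) := by
    apply tendsto_nhdsWithin_of_tendsto_nhds_of_eventually_within
    · exact (hcont.tendsto z).mono_left nhdsWithin_le_nhds
    · have hev : ∀ᶠ w in 𝓝 z, ((Real.exp w.re, w.im) : ℝ × ℝ) ∈ D :=
        (hcont.tendsto z).eventually_mem (hD.mem_nhds hz)
      filter_upwards [eventually_nhdsWithin_of_eventually_nhds hev, self_mem_nhdsWithin]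
        with w hwD hwne
      exact ⟨hwD, fun hmem => hwne (hinj w hmem)⟩
  have h2 : Tendsto (fun w : ℂ =>
      (f (Real.exp w.re, w.im) - f (Real.exp z.re, z.im)) / (Complex.exp w - Complex.exp z))
      (𝓝[≠] z) (𝓝 L) := by
    have h := hL.comp h1
    simp only [Function.comp_def] at h
    simpa only [hexp] using h
  have h3 : Tendsto (slope Complex.exp z) (𝓝[≠] z) (𝓝 (Complex.exp z)) :=
    hasDerivAt_iff_tendsto_slope.mp (Complex.hasDerivAt_exp z)
  have heq : (fun w : ℂ =>
        (f (Real.exp w.re, w.im) - f (Real.exp z.re, z.im)) / (Complex.exp w - Complex.exp z) *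
          slope Complex.exp z w)
      =ᶠ[𝓝[≠] z] slope (fun w : ℂ => f (Real.exp w.re, w.im)) z := by
    have hball : ∀ᶠ w in 𝓝 z, dist w z < 1 := by
      filter_upwards [Metric.ball_mem_nhds z one_pos] with w hw
      exact hw
    filter_upwards [eventually_nhdsWithin_of_eventually_nhds hball, self_mem_nhdsWithin]
      with w hw hwz
    have hwz' : w ≠ z := hwz
    have hEne : Complex.exp w - Complex.exp z ≠ 0 := by
      rw [sub_ne_zero]
      intro hE
      obtain ⟨n, hn⟩ := Complex.exp_eq_exp_iff_exists_int.mp hE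
      have hn0 : n ≠ 0 := by
        rintro rfl
        simp at hn
        exact hwz' hn
      have hdist : dist w z = |(n : ℝ)| * (2 * Real.pi) := by
        rw [dist_eq_norm, hn]
        simp [norm_mul, _root_.abs_of_nonneg Real.pi_pos.le]
      have h1le : (1 : ℝ) ≤ |(n : ℝ)| := by
        rw [← Int.cast_abs]
        exact_mod_cast Int.one_le_abs hn0
      have : (1 : ℝ) ≤ dist w z := by
        rw [hdist]
        calc (1 : ℝ) ≤ 2 * Real.pi := by nlinarith [Real.pi_gt_three]
          _ = 1 * (2 * Real.pi) := (one_mul _).symm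
          _ ≤ |(n : ℝ)| * (2 * Real.pi) := by
              apply mul_le_mul_of_nonneg_right h1le
              nlinarith [Real.pi_gt_three]
      linarith
    rw [slope_def_field, slope_def_field, div_mul_div_comm,
      mul_comm (f (Real.exp w.re, w.im) - f (Real.exp z.re, z.im)),
      mul_div_mul_left _ _ hEne]
  have h4 : Tendsto (slope (fun w : ℂ => f (Real.exp w.re, w.im)) z) (𝓝[≠] z)
      (𝓝 (L * Complex.exp z)) := Tendsto.congr' heq (h2.mul h3)
  exact (hasDerivAt_iff_tendsto_slope.mpr h4).differentiableAt

/-- Mellin polar derivative of a pullback `h = e^{-cz}·H(z)`. -/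
private lemma mellin_pullback {c : ℝ} {S : Set (ℝ × ℝ)} (hS : IsOpen S)
    {h : ℝ × ℝ → ℂ} {H : ℂ → ℂ}
    (hpull : ∀ q ∈ S, h q =
      Complex.exp (-((c : ℂ) * ((Real.log q.1 : ℂ) + Complex.I * (q.2 : ℂ)))) *
        H ((Real.log q.1 : ℂ) + Complex.I * (q.2 : ℂ)))
    {p : ℝ × ℝ} (hp : p ∈ S) (hp1 : 0 < p.1)
    (hH : DifferentiableAt ℂ H ((Real.log p.1 : ℂ) + Complex.I * (p.2 : ℂ))) :
    mellinPolarDeriv c h p =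
      Complex.exp (-((c : ℂ) * ((Real.log p.1 : ℂ) + Complex.I * (p.2 : ℂ)))) *
        deriv H ((Real.log p.1 : ℂ) + Complex.I * (p.2 : ℂ)) := by
  have hψ : HasDerivAt (fun r : ℝ => (Real.log r : ℂ) + Complex.I * (p.2 : ℂ))
      (((p.1)⁻¹ : ℝ) : ℂ) p.1 :=
    ((Real.hasDerivAt_log hp1.ne').ofReal_comp).add_const _
  set z : ℂ := (Real.log p.1 : ℂ) + Complex.I * (p.2 : ℂ) with hzdef
  have hWexp : HasDerivAt (fun w : ℂ => Complex.exp (-((c : ℂ) * w)))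
      (Complex.exp (-((c : ℂ) * z)) * (-(c : ℂ))) z := by
    have h1 : HasDerivAt (fun w : ℂ => -((c : ℂ) * w)) (-(c : ℂ)) z := by
      simpa [Pi.neg_def] using ((hasDerivAt_id z).const_mul (c : ℂ)).neg
    exact h1.cexp
  have hW : HasDerivAt (fun w : ℂ => Complex.exp (-((c : ℂ) * w)) * H w)
      (Complex.exp (-((c : ℂ) * z)) * (-(c : ℂ)) * H z +
        Complex.exp (-((c : ℂ) * z)) * deriv H z) z :=
    hWexp.mul hH.hasDerivAt
  have hcomp : HasDerivAt (fun r : ℝ =>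
      Complex.exp (-((c : ℂ) * ((Real.log r : ℂ) + Complex.I * (p.2 : ℂ)))) *
        H ((Real.log r : ℂ) + Complex.I * (p.2 : ℂ)))
      ((((p.1)⁻¹ : ℝ) : ℂ) • (Complex.exp (-((c : ℂ) * z)) * (-(c : ℂ)) * H z +
        Complex.exp (-((c : ℂ) * z)) * deriv H z)) p.1 :=
    hW.scomp_of_eq p.1 hψ hzdef
  have hev : (fun r : ℝ => h (r, p.2)) =ᶠ[𝓝 p.1] fun r : ℝ =>
      Complex.exp (-((c : ℂ) * ((Real.log r : ℂ) + Complex.I * (p.2 : ℂ)))) *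
        H ((Real.log r : ℂ) + Complex.I * (p.2 : ℂ)) := by
    have hc : Continuous (fun r : ℝ => ((r, p.2) : ℝ × ℝ)) :=
      continuous_id.prodMk continuous_const
    have hmem : ∀ᶠ r : ℝ in 𝓝 p.1, ((r, p.2) : ℝ × ℝ) ∈ S := by
      apply (hc.tendsto p.1).eventually_mem
      rw [Prod.mk.eta]
      exact hS.mem_nhds hp
    filter_upwards [hmem] with r hr
    exact hpull (r, p.2) hr
  have hder : HasDerivAt (fun r : ℝ => h (r, p.2))
      ((((p.1)⁻¹ : ℝ) : ℂ) • (Complex.exp (-((c : ℂ) * z)) * (-(c : ℂ)) * H z +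
        Complex.exp (-((c : ℂ) * z)) * deriv H z)) p.1 :=
    hcomp.congr_of_eventuallyEq hev
  show (p.1 : ℂ) * deriv (fun r : ℝ => h (r, p.2)) p.1 + (c : ℂ) * h p = _
  rw [hder.deriv, hpull p hp, ← hzdef]
  have hp1' : (p.1 : ℂ) ≠ 0 := by exact_mod_cast hp1.ne'
  have : (((p.1)⁻¹ : ℝ) : ℂ) = (p.1 : ℂ)⁻¹ := by push_cast; ring
  rw [this, smul_eq_mul]
  field_simp
  ring

end Aux


/-- Taylor-type expansion of a polar-analytic function in a polar disk,
with absolute convergence, and uniform convergence on smaller polar disks. -/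
theorem statement1 (D : Set (ℝ × ℝ)) (hD : IsOpen D) (hDH : D ⊆ polarHalfPlane)
    (f : ℝ × ℝ → ℂ) (hf : PolarAnalyticOn f D) (c : ℝ)
    (r₀ θ₀ : ℝ) (h₀ : (r₀, θ₀) ∈ D) (ρ : ℝ) (hρ : 0 < ρ)
    (hsub : polarDisk (r₀, θ₀) ρ ⊆ D) :
    (∀ q ∈ polarDisk (r₀, θ₀) ρ,
      Summable (fun k : ℕ =>
        ‖((mellinPolarDeriv c)^[k] f (r₀, θ₀)) / (k.factorial : ℂ) *
          ((Real.log (q.1 / r₀) : ℂ) + Complex.I * ((q.2 - θ₀ : ℝ) : ℂ)) ^ k‖) ∧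
      ((q.1 ^ c : ℝ) : ℂ) * Complex.exp (Complex.I * (c : ℂ) * (q.2 : ℂ)) * f q =
        ((r₀ ^ c : ℝ) : ℂ) * Complex.exp (Complex.I * (c : ℂ) * (θ₀ : ℂ)) *
          ∑' k : ℕ, ((mellinPolarDeriv c)^[k] f (r₀, θ₀)) / (k.factorial : ℂ) *
            ((Real.log (q.1 / r₀) : ℂ) + Complex.I * ((q.2 - θ₀ : ℝ) : ℂ)) ^ k) ∧
    ∀ ρ' : ℝ, 0 < ρ' → ρ' < ρ →
      TendstoUniformlyOn
        (fun (n : ℕ) (q : ℝ × ℝ) => ∑ k ∈ Finset.range n,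
          ((mellinPolarDeriv c)^[k] f (r₀, θ₀)) / (k.factorial : ℂ) *
            ((Real.log (q.1 / r₀) : ℂ) + Complex.I * ((q.2 - θ₀ : ℝ) : ℂ)) ^ k)
        (fun q : ℝ × ℝ => ∑' k : ℕ,
          ((mellinPolarDeriv c)^[k] f (r₀, θ₀)) / (k.factorial : ℂ) *
            ((Real.log (q.1 / r₀) : ℂ) + Complex.I * ((q.2 - θ₀ : ℝ) : ℂ)) ^ k)
        atTop (polarDisk (r₀, θ₀) ρ') := by
  classical
  have hr₀ : 0 < r₀ := hDH h₀
  set z₀ : ℂ := (Real.log r₀ : ℂ) + Complex.I * (θ₀ : ℂ) with hz₀def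
  set G : ℂ → ℂ := fun z => Complex.exp ((c : ℂ) * z) * f (Real.exp z.re, z.im) with hGdef
  have hVopen : IsOpen {z : ℂ | ((Real.exp z.re, z.im) : ℝ × ℝ) ∈ D} :=
    hD.preimage ((Real.continuous_exp.comp Complex.continuous_re).prodMk Complex.continuous_im)
  have hGdiff : DifferentiableOn ℂ G {z : ℂ | ((Real.exp z.re, z.im) : ℝ × ℝ) ∈ D} := by
    intro z hz
    have h1 : DifferentiableAt ℂ (fun z : ℂ => Complex.exp ((c : ℂ) * z)) z :=
      (differentiableAt_id.const_mul ((c : ℂ))).cexp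
    exact (h1.mul (polar_diffAt hD hf hz)).differentiableWithinAt
  have hmem : ∀ q : ℝ × ℝ, 0 < q.1 →
      ((Real.log (q.1 / r₀) : ℂ) + Complex.I * ((q.2 - θ₀ : ℝ) : ℂ)) =
        ((Real.log q.1 : ℂ) + Complex.I * (q.2 : ℂ)) - z₀ := by
    intro q hq
    rw [Real.log_div hq.ne' hr₀.ne', hz₀def]
    push_cast
    ring
  have hzmem : ∀ q : ℝ × ℝ, q ∈ polarDisk (r₀, θ₀) ρ →
      ((Real.log q.1 : ℂ) + Complex.I * (q.2 : ℂ)) ∈ Metric.ball z₀ ρ := by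
    intro q hq
    obtain ⟨hq1, hq2⟩ := hq
    rw [Metric.mem_ball, dist_eq_norm, ← hmem q hq1]
    exact hq2
  have hballV : Metric.ball z₀ ρ ⊆ {z : ℂ | ((Real.exp z.re, z.im) : ℝ × ℝ) ∈ D} := by
    intro z hz
    apply hsub
    have hre : ((Real.exp z.re, z.im) : ℝ × ℝ).1 = Real.exp z.re := rfl
    refine ⟨Real.exp_pos _, ?_⟩
    have h1 : 0 < ((Real.exp z.re, z.im) : ℝ × ℝ).1 := Real.exp_pos _
    have h2 := hmem ((Real.exp z.re, z.im) : ℝ × ℝ) h1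
    show ‖(Real.log (Real.exp z.re / r₀) : ℂ) + Complex.I * ((z.im - θ₀ : ℝ) : ℂ)‖ < ρ
    have h3 : ((Real.log (Real.exp z.re) : ℂ) + Complex.I * (z.im : ℂ)) = z := by
      rw [Real.log_exp, mul_comm Complex.I]
      exact_mod_cast Complex.re_add_im z
    calc ‖(Real.log (Real.exp z.re / r₀) : ℂ) + Complex.I * ((z.im - θ₀ : ℝ) : ℂ)‖
        = ‖((Real.log (Real.exp z.re) : ℂ) + Complex.I * (z.im : ℂ)) - z₀‖ := by rw [h2]
      _ = ‖z - z₀‖ := by rw [h3]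
      _ < ρ := by rw [← dist_eq_norm]; exact hz
  have hGball : DifferentiableOn ℂ G (Metric.ball z₀ ρ) := hGdiff.mono hballV
  have hGanal : AnalyticOnNhd ℂ G {z : ℂ | ((Real.exp z.re, z.im) : ℝ × ℝ) ∈ D} :=
    hGdiff.analyticOnNhd hVopen
  have hiter : ∀ k : ℕ,
      AnalyticOnNhd ℂ (iteratedDeriv k G) {z : ℂ | ((Real.exp z.re, z.im) : ℝ × ℝ) ∈ D} := by
    intro k
    induction k with
    | zero => simpa [iteratedDeriv_zero] using hGanal
    | succ k ih => rw [iteratedDeriv_succ]; exact ih.deriv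
  have hptV : ∀ p : ℝ × ℝ, p ∈ D →
      ((Real.exp ((Real.log p.1 : ℂ) + Complex.I * (p.2 : ℂ)).re,
        ((Real.log p.1 : ℂ) + Complex.I * (p.2 : ℂ)).im) : ℝ × ℝ) = p := by
    intro p hp
    have hp1 : 0 < p.1 := hDH hp
    simp [Real.exp_log hp1]
  have hΘ : ∀ k : ℕ, ∀ p ∈ D, (mellinPolarDeriv c)^[k] f p =
      Complex.exp (-((c : ℂ) * ((Real.log p.1 : ℂ) + Complex.I * (p.2 : ℂ)))) *
        iteratedDeriv k G ((Real.log p.1 : ℂ) + Complex.I * (p.2 : ℂ)) := by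
    intro k
    induction k with
    | zero =>
      intro p hp
      have hp1 : 0 < p.1 := hDH hp
      simp only [Function.iterate_zero_apply, iteratedDeriv_zero, hGdef]
      rw [hptV p hp, ← mul_assoc, ← Complex.exp_add, neg_add_cancel, Complex.exp_zero, one_mul]
    | succ k ih =>
      intro p hp
      have hp1 : 0 < p.1 := hDH hp
      rw [Function.iterate_succ_apply']
      have hzV : ((Real.log p.1 : ℂ) + Complex.I * (p.2 : ℂ)) ∈
          {z : ℂ | ((Real.exp z.re, z.im) : ℝ × ℝ) ∈ D} := by
        show ((Real.exp _, _) : ℝ × ℝ) ∈ D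
        rw [hptV p hp]
        exact hp
      have hH : DifferentiableAt ℂ (iteratedDeriv k G)
          ((Real.log p.1 : ℂ) + Complex.I * (p.2 : ℂ)) :=
        ((hiter k) _ hzV).differentiableAt
      rw [mellin_pullback hD ih hp hp1 hH, iteratedDeriv_succ]
  have hcoef : ∀ k : ℕ, (mellinPolarDeriv c)^[k] f (r₀, θ₀) =
      Complex.exp (-((c : ℂ) * z₀)) * iteratedDeriv k G z₀ := by
    intro k
    have := hΘ k (r₀, θ₀) h₀
    rw [hz₀def]
    exact this
  have hsum : ∀ ρ'' : ℝ, 0 ≤ ρ'' → ρ'' < ρ →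
      Summable (fun k : ℕ => ‖iteratedDeriv k G z₀ / (k.factorial : ℂ)‖ * ρ'' ^ k) := by
    intro ρ'' h0 hlt
    have hzm : z₀ + (ρ'' : ℂ) ∈ Metric.ball z₀ ρ := by
      rw [Metric.mem_ball, dist_eq_norm, add_sub_cancel_left]
      calc ‖((ρ'' : ℝ) : ℂ)‖ = |ρ''| := by rw [Complex.norm_real, Real.norm_eq_abs]
        _ = ρ'' := _root_.abs_of_nonneg h0
        _ < ρ := hlt
    have h1 := (Complex.hasSum_taylorSeries_on_ball hGball hzm).summable
    have h2 : Summable (fun k : ℕ =>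
        ‖(k.factorial : ℂ)⁻¹ • ((z₀ + (ρ'' : ℂ)) - z₀) ^ k • iteratedDeriv k G z₀‖) :=
      summable_norm_iff.mpr h1
    refine h2.congr fun k => ?_
    rw [norm_smul, norm_smul, norm_pow, add_sub_cancel_left, norm_inv, norm_div]
    have hn : ‖((ρ'' : ℝ) : ℂ)‖ = ρ'' := by
      rw [Complex.norm_real, Real.norm_eq_abs, _root_.abs_of_nonneg h0]
    rw [hn]
    ring
  constructor
  · intro q hq
    obtain ⟨hq1, hq2⟩ := hq
    have hq2' : ‖(Real.log (q.1 / r₀) : ℂ) + Complex.I * ((q.2 - θ₀ : ℝ) : ℂ)‖ < ρ := hq2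
    have hzq : ((Real.log q.1 : ℂ) + Complex.I * (q.2 : ℂ)) ∈ Metric.ball z₀ ρ :=
      hzmem q ⟨hq1, hq2⟩
    have hGq := Complex.hasSum_taylorSeries_on_ball hGball hzq
    have hS : HasSum (fun k : ℕ =>
        ((mellinPolarDeriv c)^[k] f (r₀, θ₀)) / (k.factorial : ℂ) *
          ((Real.log (q.1 / r₀) : ℂ) + Complex.I * ((q.2 - θ₀ : ℝ) : ℂ)) ^ k)
        (Complex.exp (-((c : ℂ) * z₀)) *
          G ((Real.log q.1 : ℂ) + Complex.I * (q.2 : ℂ))) := by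
      have h0 := hGq.mul_left (Complex.exp (-((c : ℂ) * z₀)))
      have hfun : (fun k : ℕ =>
          ((mellinPolarDeriv c)^[k] f (r₀, θ₀)) / (k.factorial : ℂ) *
            ((Real.log (q.1 / r₀) : ℂ) + Complex.I * ((q.2 - θ₀ : ℝ) : ℂ)) ^ k) =
          fun k : ℕ => Complex.exp (-((c : ℂ) * z₀)) *
            ((k.factorial : ℂ)⁻¹ •
              (((Real.log q.1 : ℂ) + Complex.I * (q.2 : ℂ)) - z₀) ^ k •
                iteratedDeriv k G z₀) := by
        funext k
        rw [hcoef k, ← hmem q hq1, smul_eq_mul, smul_eq_mul]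
        ring
      rw [hfun]
      exact h0
    constructor
    · set w : ℂ := (Real.log (q.1 / r₀) : ℂ) + Complex.I * ((q.2 - θ₀ : ℝ) : ℂ) with hwdef
      set ρ'' : ℝ := (‖w‖ + ρ) / 2 with hρ''def
      have h1 : ‖w‖ < ρ'' := by rw [hρ''def]; linarith
      have h2 : ρ'' < ρ := by rw [hρ''def]; linarith
      have h0 : 0 ≤ ρ'' := by positivity
      have hu := (hsum ρ'' h0 h2).mul_left ‖Complex.exp (-((c : ℂ) * z₀))‖
      refine Summable.of_nonneg_of_le (fun k => norm_nonneg _) (fun k => ?_) hu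
      rw [hcoef k, mul_div_assoc, norm_mul, norm_mul, norm_pow, mul_assoc]
      apply mul_le_mul_of_nonneg_left _ (norm_nonneg _)
      apply mul_le_mul_of_nonneg_left _ (norm_nonneg _)
      exact pow_le_pow_left₀ (norm_nonneg _) h1.le k
    · rw [hS.tsum_eq]
      have hexpq : ((q.1 ^ c : ℝ) : ℂ) * Complex.exp (Complex.I * (c : ℂ) * (q.2 : ℂ)) =
          Complex.exp ((c : ℂ) * ((Real.log q.1 : ℂ) + Complex.I * (q.2 : ℂ))) := by
        have h : (c : ℂ) * ((Real.log q.1 : ℂ) + Complex.I * (q.2 : ℂ)) =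
            ((Real.log q.1 * c : ℝ) : ℂ) + Complex.I * (c : ℂ) * (q.2 : ℂ) := by
          push_cast; ring
        rw [h, Complex.exp_add, ← Complex.ofReal_exp, ← Real.rpow_def_of_pos hq1]
      have hexp₀ : ((r₀ ^ c : ℝ) : ℂ) * Complex.exp (Complex.I * (c : ℂ) * (θ₀ : ℂ)) =
          Complex.exp ((c : ℂ) * z₀) := by
        have h : (c : ℂ) * z₀ =
            ((Real.log r₀ * c : ℝ) : ℂ) + Complex.I * (c : ℂ) * (θ₀ : ℂ) := by
          rw [hz₀def]; push_cast; ring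
        rw [h, Complex.exp_add, ← Complex.ofReal_exp, ← Real.rpow_def_of_pos hr₀]
      have hGzq : G ((Real.log q.1 : ℂ) + Complex.I * (q.2 : ℂ)) =
          Complex.exp ((c : ℂ) * ((Real.log q.1 : ℂ) + Complex.I * (q.2 : ℂ))) * f q := by
        have h := hptV q (hsub ⟨hq1, hq2⟩)
        simp only [hGdef]
        rw [h]
      rw [hexpq, hexp₀, hGzq, ← mul_assoc, ← mul_assoc, ← Complex.exp_add, add_neg_cancel,
        Complex.exp_zero, one_mul]
  · intro ρ' hρ'0 hρ'ρ
    have hu := (hsum ρ' hρ'0.le hρ'ρ).mul_left ‖Complex.exp (-((c : ℂ) * z₀))‖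
    apply tendstoUniformlyOn_tsum_nat hu
    intro k q hq
    obtain ⟨hq1, hq2⟩ := hq
    have hq2' : ‖(Real.log (q.1 / r₀) : ℂ) + Complex.I * ((q.2 - θ₀ : ℝ) : ℂ)‖ < ρ' := hq2
    rw [hcoef k, mul_div_assoc, norm_mul, norm_mul, norm_pow, mul_assoc]
    apply mul_le_mul_of_nonneg_left _ (norm_nonneg _)
    apply mul_le_mul_of_nonneg_left _ (norm_nonneg _)
    exact pow_le_pow_left₀ (norm_nonneg _) hq2'.le k


end
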